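/- Let ξ_j = Σ_{i>j} 3^{3^j − 3^i} and suppose ξ_{N+1} + ε < ξ_N for some N ≥ 1 and ε > 0. Then 3^N (ξ_{N+1} + ε) < ξ_{N-1}. -/

import Mathlib

private lemma aux_exp (j k : ℕ) : 2 * 3 ^ j + k ≤ 3 ^ (j + k + 1) - 3 ^ j := by
  have hk : k < 3 ^ k := Nat.lt_pow_self (n := k) (by norm_num)
  have h1 : 3 ^ (j + k + 1) = 3 ^ (j + 1) * 3 ^ k := by ring
  have h2 : 3 ^ (j + 1) = 3 * 3 ^ j := by ring
  have h3 : (1:ℕ) ≤ 3 ^ j := Nat.one_le_pow _ _ (by norm_num)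
  nlinarith [Nat.sub_add_cancel (show 3 ^ j ≤ 3 ^ (j + k + 1) from
    Nat.pow_le_pow_right (by norm_num) (by omega))]

private lemma aux_summable (j : ℕ) :
    Summable (fun k : ℕ => (1/3 : ℝ) ^ (3 ^ (j + k + 1) - 3 ^ j)) := by
  refine Summable.of_nonneg_of_le (fun k => by positivity) (fun k => ?_)
    (summable_geometric_of_lt_one (by norm_num) (by norm_num : (1/3:ℝ) < 1))
  apply pow_le_pow_of_le_one (by norm_num) (by norm_num)
  have := aux_exp j k
  omega

private lemma aux_upper (j : ℕ) :
    ∑' k : ℕ, (1/3 : ℝ) ^ (3 ^ (j + k + 1) - 3 ^ j) ≤ (3/2) * (1/3) ^ (2 * 3 ^ j) := by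
  have hg : Summable (fun k : ℕ => (1/3 : ℝ) ^ (2 * 3 ^ j) * (1/3) ^ k) :=
    (summable_geometric_of_lt_one (by norm_num) (by norm_num)).mul_left _
  have hle : ∀ k : ℕ, (1/3 : ℝ) ^ (3 ^ (j + k + 1) - 3 ^ j) ≤ (1/3) ^ (2 * 3 ^ j) * (1/3) ^ k := by
    intro k
    rw [← pow_add]
    exact pow_le_pow_of_le_one (by norm_num) (by norm_num) (aux_exp j k)
  calc ∑' k : ℕ, (1/3 : ℝ) ^ (3 ^ (j + k + 1) - 3 ^ j)
      ≤ ∑' k : ℕ, (1/3 : ℝ) ^ (2 * 3 ^ j) * (1/3) ^ k :=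
        Summable.tsum_le_tsum hle (aux_summable j) hg
    _ = (1/3 : ℝ) ^ (2 * 3 ^ j) * (3/2) := by
        rw [tsum_mul_left, tsum_geometric_of_lt_one (by norm_num) (by norm_num)]
        norm_num
    _ = (3/2) * (1/3) ^ (2 * 3 ^ j) := by ring

private lemma aux_lower (j : ℕ) :
    (1/3 : ℝ) ^ (2 * 3 ^ j) ≤ ∑' k : ℕ, (1/3 : ℝ) ^ (3 ^ (j + k + 1) - 3 ^ j) := by
  have h0 : (1/3 : ℝ) ^ (3 ^ (j + 0 + 1) - 3 ^ j) = (1/3) ^ (2 * 3 ^ j) := by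
    congr 1
    have : 3 ^ (j + 0 + 1) = 3 * 3 ^ j := by ring
    omega
  calc (1/3 : ℝ) ^ (2 * 3 ^ j) = (1/3 : ℝ) ^ (3 ^ (j + 0 + 1) - 3 ^ j) := h0.symm
    _ ≤ _ := Summable.le_tsum (aux_summable j) 0 (fun i _ => by positivity)

private lemma aux_zlower :
    (1/3 : ℝ) ^ 3 ≤ ∑' i : ℕ, (1/3 : ℝ) ^ (3 ^ (i + 1)) := by
  have hs : Summable (fun i : ℕ => (1/3 : ℝ) ^ (3 ^ (i + 1))) := by
    refine Summable.of_nonneg_of_le (fun k => by positivity) (fun k => ?_)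
      (summable_geometric_of_lt_one (by norm_num) (by norm_num : (1/3:ℝ) < 1))
    apply pow_le_pow_of_le_one (by norm_num) (by norm_num)
    exact le_of_lt (Nat.lt_pow_self (n := k) (a := 3) (by norm_num) |>.trans_le
      (Nat.pow_le_pow_right (by norm_num) (by omega)))
  have := Summable.le_tsum hs 0 (fun i _ => by positivity)
  simpa using this

private lemma aux_cancel (a b : ℕ) (hba : b ≤ a) :
    (3 : ℝ) ^ b * (1/3) ^ a = (1/3) ^ (a - b) := by
  have : a = (a - b) + b := (Nat.sub_add_cancel hba).symm
  rw [this, pow_add, Nat.add_sub_cancel]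
  have h1 : (3 : ℝ) ^ b * (1/3 : ℝ) ^ b = 1 := by
    rw [← mul_pow]; norm_num
  calc (3:ℝ) ^ b * ((1/3) ^ (a - b) * (1/3) ^ b)
      = (1/3 : ℝ) ^ (a - b) * ((3:ℝ) ^ b * (1/3) ^ b) := by ring
    _ = (1/3 : ℝ) ^ (a - b) := by rw [h1, mul_one]

private lemma aux_key (N : ℕ) (hN : 1 ≤ N) :
    (3 : ℝ) ^ N * ((3/2) * (1/3) ^ (2 * 3 ^ N)) ≤ (1/3) ^ (2 * 3 ^ (N - 1) + 1) := by
  obtain ⟨M, rfl⟩ : ∃ M, N = M + 1 := ⟨N - 1, by omega⟩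
  have hM : M < 3 ^ M := Nat.lt_pow_self (n := M) (by norm_num)
  have hpow : 3 ^ (M + 1) = 3 * 3 ^ M := by ring
  have hb : M + 2 ≤ 2 * 3 ^ (M + 1) := by omega
  have hsub : 2 * 3 ^ ((M + 1) - 1) + 1 ≤ 2 * 3 ^ (M + 1) - (M + 2) := by
    simp only [Nat.add_sub_cancel]
    omega
  have h1 : (3 : ℝ) ^ (M + 1) * ((3/2) * (1/3) ^ (2 * 3 ^ (M + 1)))
      ≤ (3 : ℝ) ^ (M + 2) * (1/3) ^ (2 * 3 ^ (M + 1)) := by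
    have hp : (0:ℝ) < (1/3 : ℝ) ^ (2 * 3 ^ (M + 1)) := by positivity
    have : (3:ℝ) ^ (M + 1) * (3/2) ≤ (3:ℝ) ^ (M + 2) := by
      have e : (3:ℝ) ^ (M + 2) = 3 ^ (M + 1) * 3 := pow_succ 3 (M + 1)
      nlinarith [pow_pos (show (0:ℝ) < 3 by norm_num) (M + 1)]
    nlinarith
  have h2 : (3 : ℝ) ^ (M + 2) * (1/3) ^ (2 * 3 ^ (M + 1))
      = (1/3 : ℝ) ^ (2 * 3 ^ (M + 1) - (M + 2)) := aux_cancel _ _ hb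
  have h3 : (1/3 : ℝ) ^ (2 * 3 ^ (M + 1) - (M + 2))
      ≤ (1/3 : ℝ) ^ (2 * 3 ^ ((M + 1) - 1) + 1) :=
    pow_le_pow_of_le_one (by norm_num) (by norm_num) hsub
  calc (3 : ℝ) ^ (M + 1) * ((3/2) * (1/3) ^ (2 * 3 ^ (M + 1)))
      ≤ (3 : ℝ) ^ (M + 2) * (1/3) ^ (2 * 3 ^ (M + 1)) := h1
    _ = (1/3 : ℝ) ^ (2 * 3 ^ (M + 1) - (M + 2)) := h2
    _ ≤ _ := h3

theorem stmt15
    (z : ℝ) (hz : z = ∑' i : ℕ, (1/3 : ℝ) ^ (3 ^ (i + 1)))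
    (ξ : ℕ → ℝ) (hξ0 : ξ 0 = z)
    (hξ : ∀ j : ℕ, 1 ≤ j → ξ j = ∑' k : ℕ, (1/3 : ℝ) ^ (3 ^ (j + k + 1) - 3 ^ j))
    (N : ℕ) (hN : 1 ≤ N) (ε : ℝ) (hε : 0 < ε)
    (h : ξ (N + 1) + ε < ξ N) :
    (3 : ℝ) ^ N * (ξ (N + 1) + ε) < ξ (N - 1) := by
  have hup : ξ N ≤ (3/2) * (1/3) ^ (2 * 3 ^ N) := by
    rw [hξ N hN]; exact aux_upper N
  have hpos : (0:ℝ) < (3:ℝ) ^ N := by positivity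
  have hchain : (3:ℝ) ^ N * (ξ (N + 1) + ε) < (3:ℝ) ^ N * ξ N :=
    mul_lt_mul_of_pos_left h hpos
  have h2 : (3:ℝ) ^ N * ξ N ≤ (1/3) ^ (2 * 3 ^ (N - 1) + 1) :=
    le_trans (mul_le_mul_of_nonneg_left hup (le_of_lt hpos)) (aux_key N hN)
  have h3 : (1/3 : ℝ) ^ (2 * 3 ^ (N - 1) + 1) ≤ ξ (N - 1) := by
    rcases eq_or_lt_of_le hN with h1 | h1
    · have hN1 : N = 1 := h1.symm
      subst hN1
      simp only [Nat.sub_self]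
      rw [hξ0, hz]
      have : 2 * 3 ^ (0:ℕ) + 1 = 3 := by norm_num
      rw [show (1 - 1 : ℕ) = 0 from rfl] at *
      simpa [this] using aux_zlower
    · have hN2 : 1 ≤ N - 1 := by omega
      rw [hξ (N - 1) hN2]
      calc (1/3 : ℝ) ^ (2 * 3 ^ (N - 1) + 1)
          ≤ (1/3 : ℝ) ^ (2 * 3 ^ (N - 1)) :=
            pow_le_pow_of_le_one (by norm_num) (by norm_num) (by omega)
        _ ≤ _ := aux_lower (N - 1)
  linarith
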